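/- Any lattice anti-endomorphism f of a lattice (A, ⊔, ⊓) that has a proper cycle or has at least two fixed points must have a cycle of length 2. -/

import Mathlib

/-- `f` has a cycle of length `n`: `n` distinct elements `x₀,…,x_{n-1}` with
`f(xᵢ) = x_{i+1}` (indices mod `n`). -/
def HasCycle {A : Type*} (f : A → A) (n : ℕ) : Prop :=
  ∃ x : Fin n → A, Function.Injective x ∧
    ∀ i : Fin n, f (x i) = x ⟨((i : ℕ) + 1) % n, Nat.mod_lt _ i.pos⟩

/-- `f` is a lattice anti-endomorphism. -/
def IsLatAntiEndo {A : Type*} [Lattice A] (f : A → A) : Prop :=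
  ∀ x y : A, f (x ⊔ y) = f x ⊓ f y ∧ f (x ⊓ y) = f x ⊔ f y

lemma hasCycle_two_of_swap {A : Type*} (f : A → A) {a b : A}
    (hab : a ≠ b) (h1 : f a = b) (h2 : f b = a) : HasCycle f 2 := by
  refine ⟨![a, b], ?_, ?_⟩
  · intro i j hij
    fin_cases i <;> fin_cases j <;> simp_all
  · intro i
    fin_cases i <;> simpa

lemma antiEndo_inf' {A : Type*} [Lattice A] (f : A → A) (hf : IsLatAntiEndo f)
    {ι : Type*} (s : Finset ι) (hs : s.Nonempty) (x : ι → A) :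
    f (s.inf' hs x) = s.sup' hs (f ∘ x) := by
  induction hs using Finset.Nonempty.cons_induction with
  | singleton => simp
  | cons i s hi hs ih =>
      rw [Finset.inf'_cons, Finset.sup'_cons, (hf _ _).2, ih]
      rfl
      exact hs

lemma antiEndo_sup' {A : Type*} [Lattice A] (f : A → A) (hf : IsLatAntiEndo f)
    {ι : Type*} (s : Finset ι) (hs : s.Nonempty) (x : ι → A) :
    f (s.sup' hs x) = s.inf' hs (f ∘ x) := by
  induction hs using Finset.Nonempty.cons_induction with
  | singleton => simp
  | cons i s hi hs ih =>
      rw [Finset.sup'_cons, Finset.inf'_cons, (hf _ _).1, ih]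
      rfl
      exact hs

/-- A lattice anti-endomorphism with a proper cycle or at least
two fixed points has a cycle of length 2. -/
theorem hasCycle_two_of_antiEndo {A : Type*} [Lattice A] (f : A → A)
    (hf : IsLatAntiEndo f)
    (h : (∃ n : ℕ, 2 ≤ n ∧ HasCycle f n) ∨ ∃ u v : A, u ≠ v ∧ f u = u ∧ f v = v) :
    HasCycle f 2 := by
  rcases h with ⟨n, hn, x, hinj, hcyc⟩ | ⟨u, v, huv, hu, hv⟩
  · have hne : (Finset.univ : Finset (Fin n)).Nonempty :=
      ⟨⟨0, by omega⟩, Finset.mem_univ _⟩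
    set a := Finset.univ.inf' hne x with ha
    set b := Finset.univ.sup' hne x with hb
    -- the shift map is a bijection
    have hsup_shift : Finset.univ.sup' hne (f ∘ x) = b := by
      apply le_antisymm
      · apply Finset.sup'_le
        intro i _
        rw [Function.comp_apply, hcyc i]
        exact Finset.le_sup' x (Finset.mem_univ _)
      · apply Finset.sup'_le
        intro i _
        have : x i = (f ∘ x) ⟨((i : ℕ) + (n-1)) % n, Nat.mod_lt _ i.pos⟩ := by
          rw [Function.comp_apply, hcyc]
          congr 1
          ext
          simp only [Nat.mod_add_mod]
          have h1 : (i : ℕ) + (n-1) + 1 = (i : ℕ) + n := by omega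
          rw [h1, Nat.add_mod_right, Nat.mod_eq_of_lt i.isLt]
        rw [this]
        exact Finset.le_sup' (f ∘ x) (Finset.mem_univ _)
    have hinf_shift : Finset.univ.inf' hne (f ∘ x) = a := by
      apply le_antisymm
      · apply Finset.le_inf'
        intro i _
        have : x i = (f ∘ x) ⟨((i : ℕ) + (n-1)) % n, Nat.mod_lt _ i.pos⟩ := by
          rw [Function.comp_apply, hcyc]
          congr 1
          ext
          simp only [Nat.mod_add_mod]
          have h1 : (i : ℕ) + (n-1) + 1 = (i : ℕ) + n := by omega
          rw [h1, Nat.add_mod_right, Nat.mod_eq_of_lt i.isLt]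
        rw [this]
        exact Finset.inf'_le (f ∘ x) (Finset.mem_univ _)
      · apply Finset.le_inf'
        intro i _
        rw [Function.comp_apply, hcyc i]
        exact Finset.inf'_le x (Finset.mem_univ _)
    have hfa : f a = b := by rw [ha, antiEndo_inf' f hf _ hne, hsup_shift]
    have hfb : f b = a := by rw [hb, antiEndo_sup' f hf _ hne, hinf_shift]
    have hab : a ≠ b := by
      intro hab
      have h0 : (⟨0, by omega⟩ : Fin n) ≠ ⟨1, by omega⟩ := by
        simp [Fin.ext_iff]
      apply h0
      apply hinj
      have h01 : x ⟨0, by omega⟩ ≤ x ⟨1, by omega⟩ := by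
        calc x ⟨0, by omega⟩ ≤ b := Finset.le_sup' x (Finset.mem_univ _)
        _ = a := hab.symm
        _ ≤ x ⟨1, by omega⟩ := Finset.inf'_le x (Finset.mem_univ _)
      have h10 : x ⟨1, by omega⟩ ≤ x ⟨0, by omega⟩ := by
        calc x ⟨1, by omega⟩ ≤ b := Finset.le_sup' x (Finset.mem_univ _)
        _ = a := hab.symm
        _ ≤ x ⟨0, by omega⟩ := Finset.inf'_le x (Finset.mem_univ _)
      exact le_antisymm h01 h10
    exact hasCycle_two_of_swap f hab hfa hfb
  · have hfa : f (u ⊓ v) = u ⊔ v := by rw [(hf u v).2, hu, hv]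
    have hfb : f (u ⊔ v) = u ⊓ v := by rw [(hf u v).1, hu, hv]
    have hab : u ⊓ v ≠ u ⊔ v := by
      intro hh
      exact huv (inf_eq_sup.mp hh)
    exact hasCycle_two_of_swap f hab hfa hfb
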